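/- Let R, U, Z be commutative rings, p : R → U surjective, q : R → Z a surjective ring homomorphism, and s : Z → R an additive map such that: (i) s(q(x)·z) = x·s(z); (ii) q∘s is multiplication by a non-zero-divisor c ∈ Z; (iii) ker p = image s. Then for every u ∈ U and z ∈ Z such that q(f) − z ∈ (c) for some f ∈ R with p(f) = u, there exists g ∈ R with p(g) = u and q(g) = z. In particular, R is isomorphic to the fiber product of U and Z over Z/(c). -/

import Mathlib

/-- Abstract form of the patching lemma: with `p` and `q` surjective, every pair
`(u, z)` compatible modulo `(c)` lifts to a single element of `R`; together with
injectivity this identifies `R` with the fiber product `U ×_{Z/(c)} Z`. -/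
theorem stmt13 {R U Z : Type*} [CommRing R] [CommRing U] [CommRing Z]
    (p : R →+* U) (q : R →+* Z) (s : Z →+ R) (c : Z)
    (hc : c ∈ nonZeroDivisors Z)
    (hp : Function.Surjective p) (hq : Function.Surjective q)
    (hproj : ∀ (x : R) (z : Z), s (q x * z) = x * s z)
    (hqs : ∀ z : Z, q (s z) = c * z)
    (hker : ∀ f : R, p f = 0 ↔ ∃ z : Z, s z = f) :
    (∀ (u : U) (z : Z), (∃ f : R, p f = u ∧ q f - z ∈ Ideal.span {c}) →
        ∃ g : R, p g = u ∧ q g = z) ∧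
      ∀ f g : R, p f = p g → q f = q g → f = g := by
  have hps : ∀ w : Z, p (s w) = 0 := fun w => (hker (s w)).2 ⟨w, rfl⟩
  constructor
  · rintro u z ⟨f, hf, hmem⟩
    rw [Ideal.mem_span_singleton] at hmem
    obtain ⟨w, hw⟩ := hmem
    refine ⟨f - s w, ?_, ?_⟩
    · rw [map_sub, hf, hps, sub_zero]
    · rw [map_sub, hqs, ← hw]; ring
  · intro f g hpfg hqfg
    have h0 : p (f - g) = 0 := by rw [map_sub, hpfg, sub_self]
    obtain ⟨z, hz⟩ := (hker (f - g)).1 h0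
    have : c * z = 0 := by rw [← hqs, hz, map_sub, hqfg, sub_self]
    have hz0 : z = 0 := hc.2 z (by rwa [mul_comm] at this)
    rw [hz0, map_zero] at hz
    exact (sub_eq_zero.1 hz.symm)
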